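/- Assume μ_1 − λ ≥ ρ_1 > 0 and that for every j ∉ C, if a_j ∈ S_h for some h then a_j = μ_h − λ + ρ_h. Then the GNS-lifted cover inequality ∑_{j∈C} x_j + ∑_{j∉C} g_{1/ρ_1}(a_j) x_j ≤ |C| − 1 is valid for P and defines a facet of conv(P); i.e., it is satisfied by every x ∈ P and there exist n affinely independent points x ∈ P satisfying it with equality. -/

import Mathlib

/-- `μ_h = a_1 + ⋯ + a_h` (as a real number). -/
noncomputable def mu (a : ℕ → ℕ) (h : ℕ) : ℝ := ∑ i ∈ Finset.Icc 1 h, (a i : ℝ)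

/-- `λ = μ_t − b`, the excess weight of the cover. -/
noncomputable def lam (a : ℕ → ℕ) (t b : ℕ) : ℝ := mu a t - (b : ℝ)

/-- `ρ_h = max(0, a_{h+1} − (a_1 − λ))`. -/
noncomputable def rho (a : ℕ → ℕ) (t b : ℕ) (h : ℕ) : ℝ :=
  max 0 ((a (h + 1) : ℝ) - ((a 1 : ℝ) - lam a t b))

/-- `w_k(x) = k·x + (1 − k·ρ₁)/2`, where `r` stands for `ρ₁`. -/
noncomputable def wk (r k x : ℝ) : ℝ := k * x + (1 - k * r) / 2

lemma mu_mono (a : ℕ → ℕ) : Monotone (mu a) := by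
  intro h h' hh
  exact Finset.sum_le_sum_of_subset_of_nonneg
    (Finset.Icc_subset_Icc le_rfl hh) (by intro i _ _; positivity)

lemma Icc_eq_Ioc (h : ℕ) : Finset.Icc 1 h = Finset.Ioc 0 h := by
  ext x; simp [Nat.lt_iff_add_one_le]

lemma mu_Ioc (a : ℕ → ℕ) (h : ℕ) : mu a h = ∑ i ∈ Finset.Ioc 0 h, (a i : ℝ) := by
  rw [mu, Icc_eq_Ioc]

lemma mu_succ (a : ℕ → ℕ) (h : ℕ) : mu a (h + 1) = mu a h + a (h + 1) := by
  rw [mu_Ioc, mu_Ioc, Finset.sum_Ioc_succ_top (Nat.zero_le _)]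

lemma mu_zero (a : ℕ → ℕ) : mu a 0 = 0 := by simp [mu]

lemma mu_one (a : ℕ → ℕ) : mu a 1 = a 1 := by simp [mu]

lemma mu_diff (a : ℕ → ℕ) {c d : ℕ} (h : c ≤ d) :
    mu a d - mu a c = ∑ i ∈ Finset.Ioc c d, (a i : ℝ) := by
  rw [mu_Ioc, mu_Ioc,
    ← Finset.sum_Ioc_consecutive (fun i => (a i : ℝ)) (Nat.zero_le c) h]
  ring

lemma mu_nonneg (a : ℕ → ℕ) (h : ℕ) : 0 ≤ mu a h := by
  unfold mu; positivity


section Main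
variable {t n b : ℕ} {a : ℕ → ℕ}

lemma sum_window (hmono : ∀ i j, 1 ≤ i → i ≤ j → j ≤ t → a j ≤ a i)
    {l k m : ℕ} (hl1 : 1 ≤ l) (hl : l ≤ k) (hkm : k + m ≤ t) :
    ∑ i ∈ Finset.Ioc k (k + m), (a i : ℝ) ≤ ∑ i ∈ Finset.Ioc l (l + m), (a i : ℝ) := by
  induction m with
  | zero => simp
  | succ m ih =>
      rw [show k + (m+1) = (k+m) + 1 by ring, show l + (m+1) = (l+m) + 1 by ring,
        Finset.sum_Ioc_succ_top (by omega), Finset.sum_Ioc_succ_top (by omega)]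
      have h1 : a (k + m + 1) ≤ a (l + m + 1) := hmono _ _ (by omega) (by omega) (by omega)
      have h2 := ih (by omega)
      exact add_le_add h2 (by exact_mod_cast h1)

lemma lam_pos (hcover : (b : ℝ) < mu a t) : 0 < lam a t b := by
  unfold lam; linarith

lemma lam_le_at (hmin : mu a t - (a t : ℝ) ≤ b) : lam a t b ≤ a t := by
  unfold lam; linarith

lemma rho_nonneg (h : ℕ) : 0 ≤ rho a t b h := le_max_left _ _

lemma rho_ge (h : ℕ) : (a (h+1) : ℝ) - ((a 1 : ℝ) - lam a t b) ≤ rho a t b h :=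
  le_max_right _ _

lemma rho_anti (hmono : ∀ i j, 1 ≤ i → i ≤ j → j ≤ t → a j ≤ a i)
    {h1 h2 : ℕ} (h11 : 1 ≤ h1) (hh : h1 ≤ h2) (h2t : h2 + 1 ≤ t) :
    rho a t b h2 ≤ rho a t b h1 := by
  apply max_le (rho_nonneg _)
  have := hmono (h1+1) (h2+1) (by omega) (by omega) (by omega)
  have := rho_ge (a := a) (t := t) (b := b) h1
  have : ((a (h2+1) : ℝ)) ≤ (a (h1+1) : ℝ) := by exact_mod_cast ‹a (h2+1) ≤ a (h1+1)›
  linarith [rho_ge (a := a) (t := t) (b := b) h1]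

lemma fKey (hmono : ∀ i j, 1 ≤ i → i ≤ j → j ≤ t → a j ≤ a i)
    {h1 h2 K : ℕ} (h11 : 1 ≤ h1) (h21 : 1 ≤ h2) (hK : K ≤ t) (hKsum : K ≤ h1 + h2) :
    mu a K - lam a t b + rho a t b h1 ≤
      (mu a h1 - lam a t b + rho a t b h1) + (mu a h2 - lam a t b + rho a t b h2) := by
  have hstep : mu a (h2+1) - (a 1 : ℝ) ≤ mu a h2 + rho a t b h2 - lam a t b := by
    have := rho_ge (a := a) (t := t) (b := b) h2
    have := mu_succ a h2
    linarith
  rcases le_or_gt K h1 with hcase | hcase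
  · have hm1 : mu a K ≤ mu a h1 := mu_mono a hcase
    have hm2 : mu a 1 ≤ mu a (h2+1) := mu_mono a (by omega)
    rw [mu_one] at hm2
    linarith
  · set m := K - h1 with hm
    have hKm : K = h1 + m := by omega
    have hwin : ∑ i ∈ Finset.Ioc h1 (h1 + m), (a i : ℝ) ≤
        ∑ i ∈ Finset.Ioc 1 (1 + m), (a i : ℝ) :=
      sum_window hmono le_rfl h11 (by omega)
    have hd1 : mu a K - mu a h1 = ∑ i ∈ Finset.Ioc h1 (h1+m), (a i : ℝ) := by
      rw [hKm]; exact mu_diff a (by omega)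
    have hd2 : mu a (1+m) - mu a 1 = ∑ i ∈ Finset.Ioc 1 (1+m), (a i : ℝ) :=
      mu_diff a (by omega)
    have hm2 : mu a (1+m) ≤ mu a (h2+1) := mu_mono a (by omega)
    rw [mu_one] at hd2
    linarith

end Main

section LemE
variable {t n b : ℕ} {a : ℕ → ℕ}

lemma lemE (ht : 2 ≤ t)
    (hmono : ∀ i j, 1 ≤ i → i ≤ j → j ≤ t → a j ≤ a i)
    (hcover : (b : ℝ) < mu a t)
    (hrho1 : 0 < rho a t b 1)
    (hmain : rho a t b 1 ≤ mu a 1 - lam a t b) :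
    ∀ m (L : List (ℕ × ℝ)), L.length = m → L ≠ [] →
    (∀ p ∈ L, 1 ≤ p.1 ∧ p.1 + 1 ≤ t ∧
      mu a p.1 - lam a t b + rho a t b p.1 ≤ p.2 ∧ mu a p.1 - lam a t b < p.2) →
    ∀ K, 1 ≤ K → K ≤ t → K ≤ (L.map Prod.fst).sum →
    mu a K - lam a t b < (L.map Prod.snd).sum := by
  intro m
  induction m using Nat.strong_induction_on with
  | _ m IH =>
    intro L hlen hne hinv K hK1 hKt hKsum
    have hsnd_pos : ∀ p ∈ L, (0:ℝ) < p.2 := by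
      intro p hp
      obtain ⟨hp1, hpt, hpf, hps⟩ := hinv p hp
      have : mu a 1 ≤ mu a p.1 := mu_mono a hp1
      linarith
    match L, hlen, hne with
    | [p], hlen, _ =>
      obtain ⟨hp1, hpt, hpf, hps⟩ := hinv p (by simp)
      simp only [List.map_cons, List.map_nil, List.sum_cons, List.sum_nil, add_zero] at hKsum ⊢
      have : mu a K ≤ mu a p.1 := mu_mono a hKsum
      linarith
    | p :: q :: L', hlen, _ =>
      obtain ⟨hp1, hpt, hpf, hps⟩ := hinv p (by simp)
      obtain ⟨hq1, hqt, hqf, hqs⟩ := hinv q (by simp)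
      have hposL' : (0:ℝ) ≤ (L'.map Prod.snd).sum := by
        apply List.sum_nonneg
        intro x hx
        obtain ⟨r, hr, rfl⟩ := List.mem_map.mp hx
        exact le_of_lt (hsnd_pos r (by simp [hr]))
      simp only [List.map_cons, List.sum_cons] at hKsum ⊢
      rcases le_or_gt t (p.1 + q.1) with hbig | hsmall
      · -- overflow: p.2 + q.2 > mu t - lam
        have key := fKey (a := a) (b := b) hmono hp1 hq1 (le_refl t) hbig
        have hmuK : mu a K ≤ mu a t := mu_mono a hKt
        rcases (rho_nonneg (a := a) (t := t) (b := b) p.1).eq_or_lt with hz | hz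
        · -- rho p.1 = 0, use strictness of p
          rw [← hz] at key hpf
          linarith
        · linarith
      · -- merge p and q
        have hkey := fKey (a := a) (b := b) hmono hp1 hq1 (le_of_lt hsmall) (le_refl _)
        have hanti : rho a t b (p.1 + q.1) ≤ rho a t b p.1 :=
          rho_anti hmono hp1 (by omega) (by omega)
        have hmerge_f : mu a (p.1 + q.1) - lam a t b + rho a t b (p.1 + q.1)
            ≤ p.2 + q.2 := by linarith
        have hmerge_s : mu a (p.1 + q.1) - lam a t b < p.2 + q.2 := by
          rcases (rho_nonneg (a := a) (t := t) (b := b) p.1).eq_or_lt with hz | hz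
          · rw [← hz] at hkey hpf; linarith
          · linarith
        have happ := IH (L'.length + 1) (by simp at hlen; omega) ((p.1 + q.1, p.2 + q.2) :: L')
          (by simp) (by simp)
          (by
            intro r hr
            rcases List.mem_cons.mp hr with rfl | hr'
            · exact ⟨by omega, by omega, hmerge_f, hmerge_s⟩
            · exact hinv r (by simp [hr']))
          K hK1 hKt (by simp only [List.map_cons, List.sum_cons]; omega)
        simp only [List.map_cons, List.sum_cons] at happ
        linarith

end LemE

section Aux2
variable {t n b : ℕ} {a : ℕ → ℕ}

lemma level_exists (ht : 1 ≤ t) (hcover : (b : ℝ) < mu a t) {z : ℝ}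
    (hz : 0 < z) (hzb : z ≤ mu a t - lam a t b) :
    ∃ h, h ≤ t - 1 ∧ mu a h - lam a t b < z ∧ z ≤ mu a (h+1) - lam a t b := by
  classical
  have hlam := lam_pos (a := a) (t := t) hcover
  have hP : z ≤ mu a ((t-1)+1) - lam a t b := by
    rw [show t-1+1 = t by omega]; exact hzb
  have hex : ∃ h, z ≤ mu a (h+1) - lam a t b := ⟨t-1, hP⟩
  refine ⟨Nat.find hex, Nat.find_min' hex hP, ?_, Nat.find_spec hex⟩
  rcases Nat.eq_zero_or_pos (Nat.find hex) with h0 | h0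
  · rw [h0, mu_zero]; linarith
  · have := Nat.find_min hex (m := Nat.find hex - 1) (by omega)
    push_neg at this
    rw [show Nat.find hex - 1 + 1 = Nat.find hex by omega] at this
    exact this

lemma sumD (hmono : ∀ i j, 1 ≤ i → i ≤ j → j ≤ t → a j ≤ a i) :
    ∀ m (D : Finset ℕ), D ⊆ Finset.Icc 1 t → D.card = m → ∑ i ∈ D, (a i : ℝ) ≤ mu a m := by
  intro m
  induction m with
  | zero =>
    intro D hD hc
    rw [Finset.card_eq_zero] at hc; subst hc; simp [mu_zero]
  | succ m ih =>
    intro D hD hc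
    have hne : D.Nonempty := Finset.card_pos.mp (by omega)
    set d := D.max' hne with hd
    have hdD : d ∈ D := D.max'_mem hne
    have hsub : D ⊆ Finset.Icc 1 d := by
      intro x hx
      exact Finset.mem_Icc.mpr ⟨(Finset.mem_Icc.mp (hD hx)).1, D.le_max' x hx⟩
    have hcard : m + 1 ≤ d := by
      have := Finset.card_le_card hsub
      rw [hc, Nat.card_Icc] at this; omega
    have hdt : d ≤ t := (Finset.mem_Icc.mp (hD hdD)).2
    have hsplit : ∑ i ∈ D, (a i : ℝ) = a d + ∑ i ∈ D.erase d, (a i : ℝ) :=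
      (Finset.add_sum_erase D _ hdD).symm
    have hih := ih (D.erase d) ((Finset.erase_subset _ _).trans hD)
      (by rw [Finset.card_erase_of_mem hdD, hc]; omega)
    have ha : (a d : ℝ) ≤ a (m+1) := by
      exact_mod_cast hmono (m+1) d (by omega) hcard hdt
    rw [mu_succ]; linarith

lemma sumFin (F : ℕ → ℝ) {c d : ℕ} (hd : d ≤ n) :
    (∑ j : Fin n, if c < (j:ℕ)+1 ∧ (j:ℕ)+1 ≤ d then F ((j:ℕ)+1) else 0)
      = ∑ i ∈ Finset.Ioc c d, F i := by
  classical
  rw [Fin.sum_univ_eq_sum_range (fun k => if c < k+1 ∧ k+1 ≤ d then F (k+1) else 0) n]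
  rw [← Finset.sum_filter]
  have hset : (Finset.range n).filter (fun k => c < k+1 ∧ k+1 ≤ d) = Finset.Ico c d := by
    ext k; simp [Finset.mem_filter, Finset.mem_range, Finset.mem_Ico]; omega
  rw [hset]
  rw [← Finset.Ico_add_one_add_one_eq_Ioc, Finset.sum_Ico_eq_sum_range, Finset.sum_Ico_eq_sum_range]
  apply Finset.sum_congr (by congr 1; omega)
  intro i _
  congr 1; omega

end Aux2

section Valid
variable {t n b : ℕ} {a : ℕ → ℕ} {gGNS : ℝ → ℝ}

/-- Choice of levels with coefficient identification. -/
lemma level_choice (ht : 2 ≤ t)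
    (hcover : (b : ℝ) < mu a t)
    (hrho1 : 0 < rho a t b 1)
    (hposn : ∀ i, 1 ≤ i → i ≤ n → 0 < a i)
    (halb : ∀ i, 1 ≤ i → i ≤ n → a i ≤ b)
    (hGF : ∀ h : ℕ, h ≤ t - 1 → ∀ z : ℝ,
      mu a h - lam a t b + rho a t b h < z → z ≤ mu a (h + 1) - lam a t b →
      gGNS z = (h : ℝ))
    (hGS : ∀ h : ℕ, 1 ≤ h → h ≤ t - 1 → ∀ z : ℝ,
      mu a h - lam a t b < z → z ≤ mu a h - lam a t b + rho a t b h →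
      gGNS z = (h : ℝ) - (mu a h - lam a t b + rho a t b h - z) / rho a t b 1)
    (hScond : ∀ j, t + 1 ≤ j → j ≤ n → ∀ h : ℕ, 1 ≤ h → h ≤ t - 1 →
      mu a h - lam a t b < (a j : ℝ) →
      (a j : ℝ) ≤ mu a h - lam a t b + rho a t b h →
      (a j : ℝ) = mu a h - lam a t b + rho a t b h) :
    ∀ j : ℕ, ∃ h : ℕ, t + 1 ≤ j → j ≤ n →
      h ≤ t - 1 ∧ mu a h - lam a t b < (a j : ℝ) ∧
      (a j : ℝ) ≤ mu a (h+1) - lam a t b ∧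
      mu a h - lam a t b + rho a t b h ≤ (a j : ℝ) ∧
      gGNS (a j) = (h : ℝ) := by
  intro j
  by_cases hj : t + 1 ≤ j ∧ j ≤ n
  · have hzpos : (0:ℝ) < a j := by exact_mod_cast hposn j (by omega) hj.2
    have hzb : (a j : ℝ) ≤ mu a t - lam a t b := by
      have : (a j : ℝ) ≤ b := by exact_mod_cast halb j (by omega) hj.2
      unfold lam; linarith
    obtain ⟨h, hht, hlow, hup⟩ := level_exists (by omega) hcover hzpos hzb
    rcases le_or_gt ((a j : ℝ)) (mu a h - lam a t b + rho a t b h) with hS | hF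
    · have hh1 : 1 ≤ h := by
        rcases Nat.eq_zero_or_pos h with h0 | h0
        · exfalso
          have hr0 : rho a t b 0 = lam a t b := by
            unfold rho
            have : ((a (0+1) : ℝ)) - ((a 1 : ℝ) - lam a t b) = lam a t b := by norm_num
            rw [this]
            exact max_eq_right (lam_pos hcover).le
          rw [h0, mu_zero, hr0] at hS
          linarith
        · omega
      have heq := hScond j hj.1 hj.2 h hh1 hht hlow hS
      have hg := hGS h hh1 hht (a j) hlow hS
      rw [← heq] at hg
      simp at hg
      exact ⟨h, fun _ _ => ⟨hht, hlow, hup, le_of_eq heq.symm, hg⟩⟩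
    · have hg := hGF h hht (a j) hF hup
      exact ⟨h, fun _ _ => ⟨hht, hlow, hup, hF.le, hg⟩⟩
  · exact ⟨0, fun c1 c2 => absurd ⟨c1, c2⟩ hj⟩

lemma validity (ht : 2 ≤ t)
    (hmono : ∀ i j, 1 ≤ i → i ≤ j → j ≤ t → a j ≤ a i)
    (hcover : (b : ℝ) < mu a t)
    (hrho1 : 0 < rho a t b 1)
    (htn : t < n)
    (hmain : rho a t b 1 ≤ mu a 1 - lam a t b)
    (lv : ℕ → ℕ)
    (hlv : ∀ j : ℕ, t + 1 ≤ j → j ≤ n →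
      lv j ≤ t - 1 ∧ mu a (lv j) - lam a t b < (a j : ℝ) ∧
      (a j : ℝ) ≤ mu a (lv j + 1) - lam a t b ∧
      mu a (lv j) - lam a t b + rho a t b (lv j) ≤ (a j : ℝ) ∧
      gGNS (a j) = (lv j : ℝ)) :
    ∀ x : Fin n → ℝ, (∀ j, x j = 0 ∨ x j = 1) →
      (∑ j : Fin n, (a ((j : ℕ) + 1) : ℝ) * x j) ≤ (b : ℝ) →
      (∑ j : Fin n,
        (if (j : ℕ) + 1 ≤ t then 1 else gGNS (a ((j : ℕ) + 1))) * x j) ≤ (t : ℝ) - 1 := by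
  classical
  intro x hx hfeas
  have hlam := lam_pos (a := a) (t := t) hcover
  set S : Finset (Fin n) := Finset.univ.filter (fun j => x j = 1) with hSdef
  have hsum_eq : ∀ (G : Fin n → ℝ), ∑ j : Fin n, G j * x j = ∑ j ∈ S, G j := by
    intro G
    rw [hSdef, Finset.sum_filter]
    apply Finset.sum_congr rfl
    intro j _
    rcases hx j with h | h <;> simp [h]
  set S1 : Finset (Fin n) := S.filter (fun j => (j : ℕ) + 1 ≤ t) with hS1def
  set S2 : Finset (Fin n) := S.filter (fun j => ¬((j : ℕ) + 1 ≤ t)) with hS2def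
  have hjS2 : ∀ j ∈ S2, t + 1 ≤ (j : ℕ) + 1 ∧ (j : ℕ) + 1 ≤ n := by
    intro j hj
    rw [hS2def, Finset.mem_filter] at hj
    exact ⟨by omega, j.isLt⟩
  -- coefficient sum
  have hcoeff : ∑ j : Fin n, (if (j : ℕ) + 1 ≤ t then 1 else gGNS (a ((j : ℕ) + 1))) * x j
      = (S1.card : ℝ) + ∑ j ∈ S2, ((lv ((j : ℕ) + 1) : ℕ) : ℝ) := by
    rw [hsum_eq]
    rw [← Finset.sum_filter_add_sum_filter_not S (fun j => (j : ℕ) + 1 ≤ t), ← hS1def, ← hS2def]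
    congr 1
    · have hone : ∀ j ∈ S1, (if (j:ℕ)+1 ≤ t then (1:ℝ) else gGNS (a ((j:ℕ)+1))) = 1 := by
        intro j hj
        rw [hS1def, Finset.mem_filter] at hj
        rw [if_pos hj.2]
      rw [Finset.sum_congr rfl hone, Finset.sum_const, nsmul_eq_mul, mul_one]
    · apply Finset.sum_congr rfl
      intro j hj
      have h2 := hjS2 j hj
      rw [if_neg (by omega)]
      exact (hlv ((j : ℕ) + 1) h2.1 h2.2).2.2.2.2
  -- weight bound pieces
  have hweight : ∑ j ∈ S1, ((a ((j : ℕ) + 1) : ℕ) : ℝ) + ∑ j ∈ S2, ((a ((j : ℕ) + 1) : ℕ) : ℝ) ≤ b := by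
    rw [hS1def, hS2def, Finset.sum_filter_add_sum_filter_not]
    rw [← hsum_eq (fun j => ((a ((j : ℕ) + 1) : ℕ) : ℝ))]
    exact hfeas
  -- lower bound on cover part
  set B : Finset ℕ := S1.image (fun j : Fin n => (j : ℕ) + 1) with hBdef
  have hinj : ∀ j ∈ S1, ∀ j' ∈ S1, (j : ℕ) + 1 = (j' : ℕ) + 1 → j = j' := by
    intro j _ j' _ h
    exact Fin.ext (by omega)
  have hBcard : B.card = S1.card := Finset.card_image_of_injOn hinj
  have hBsub : B ⊆ Finset.Icc 1 t := by
    intro i hi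
    rw [hBdef] at hi
    obtain ⟨j, hj, rfl⟩ := Finset.mem_image.mp hi
    rw [hS1def, Finset.mem_filter] at hj
    exact Finset.mem_Icc.mpr ⟨by omega, hj.2⟩
  have hBsum : ∑ j ∈ S1, ((a ((j : ℕ) + 1) : ℕ) : ℝ) = ∑ i ∈ B, (a i : ℝ) := by
    rw [hBdef, Finset.sum_image hinj]
  have hs_le : S1.card ≤ t := by
    have := Finset.card_le_card hBsub
    rw [hBcard, Nat.card_Icc] at this; omega
  have hBlow : mu a t - mu a (t - S1.card) ≤ ∑ i ∈ B, (a i : ℝ) := by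
    have h1 := sumD hmono (Finset.Icc 1 t \ B).card (Finset.Icc 1 t \ B)
      (Finset.sdiff_subset) rfl
    have h2 : (Finset.Icc 1 t \ B).card = t - S1.card := by
      rw [Finset.card_sdiff_of_subset hBsub, Nat.card_Icc, hBcard]; omega
    have h3 : ∑ i ∈ Finset.Icc 1 t \ B, (a i : ℝ)
        = mu a t - ∑ i ∈ B, (a i : ℝ) := by
      rw [Finset.sum_sdiff_eq_sub hBsub]; rfl
    rw [h2, h3] at h1
    linarith
  -- the natural number inequality
  set S2' : Finset (Fin n) := S2.filter (fun j => 1 ≤ lv ((j : ℕ) + 1)) with hS2'def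
  have hcoe2 : ∑ j ∈ S2, ((lv ((j : ℕ) + 1) : ℕ) : ℝ)
      = ((∑ j ∈ S2', lv ((j : ℕ) + 1) : ℕ) : ℝ) := by
    push_cast
    rw [hS2'def]
    symm
    apply Finset.sum_filter_of_ne
    intro j _ hne
    by_contra hcon
    apply hne
    have h0 : lv ((j : ℕ) + 1) = 0 := by omega
    rw [h0]
    norm_num
  set Hn : ℕ := ∑ j ∈ S2', lv ((j : ℕ) + 1) with hHn
  have hkey : S1.card + Hn + 1 ≤ t := by
    by_contra hcon
    push_neg at hcon
    have hcon' : t ≤ S1.card + Hn := by omega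
    have hz2 : ∑ j ∈ S2', ((a ((j : ℕ) + 1) : ℕ) : ℝ)
        ≤ mu a (t - S1.card) - lam a t b := by
      have hsub : ∑ j ∈ S2', ((a ((j : ℕ) + 1) : ℕ) : ℝ) ≤ ∑ j ∈ S2, ((a ((j : ℕ) + 1) : ℕ) : ℝ) := by
        apply Finset.sum_le_sum_of_subset_of_nonneg (Finset.filter_subset _ _)
        intro j _ _; positivity
      have : lam a t b = mu a t - b := rfl
      rw [hBsum] at hweight
      linarith
    rcases Nat.eq_or_lt_of_le hs_le with hst | hst
    · -- S1.card = t : already infeasible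
      rw [hst, Nat.sub_self, mu_zero] at hz2
      have : (0:ℝ) ≤ ∑ j ∈ S2', ((a ((j : ℕ) + 1) : ℕ) : ℝ) := by positivity
      linarith
    · set K : ℕ := t - S1.card with hK
      have hK1 : 1 ≤ K := by omega
      have hKt : K ≤ t := by omega
      have hKH : K ≤ Hn := by omega
      have hS2'ne : S2'.Nonempty := by
        rcases Finset.eq_empty_or_nonempty S2' with he | hne
        · exfalso; rw [he] at hHn; simp at hHn; omega
        · exact hne
      set L : List (ℕ × ℝ) := S2'.toList.map
        (fun j : Fin n => (lv ((j : ℕ) + 1), ((a ((j : ℕ) + 1) : ℕ) : ℝ))) with hL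
      have hLne : L ≠ [] := by
        rw [hL]
        simp only [ne_eq, List.map_eq_nil_iff, Finset.toList_eq_nil]
        exact Finset.nonempty_iff_ne_empty.mp hS2'ne
      have hLinv : ∀ p ∈ L, 1 ≤ p.1 ∧ p.1 + 1 ≤ t ∧
          mu a p.1 - lam a t b + rho a t b p.1 ≤ p.2 ∧ mu a p.1 - lam a t b < p.2 := by
        intro p hp
        rw [hL] at hp
        obtain ⟨j, hj, rfl⟩ := List.mem_map.mp hp
        rw [Finset.mem_toList] at hj
        rw [hS2'def, Finset.mem_filter] at hj
        have hj2 : j ∈ S2 := hj.1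
        have hlvj : 1 ≤ lv ((j : ℕ) + 1) := hj.2
        have hrange := hjS2 j hj2
        obtain ⟨h1, h2, h3, h4, h5⟩ := hlv ((j : ℕ) + 1) hrange.1 hrange.2
        exact ⟨hlvj, by omega, h4, h2⟩
      have hLfst : (L.map Prod.fst).sum = Hn := by
        rw [hL, List.map_map]
        rw [hHn]
        exact Finset.sum_map_toList S2' (fun j => lv ((j : ℕ) + 1))
      have hLsnd : (L.map Prod.snd).sum = ∑ j ∈ S2', ((a ((j : ℕ) + 1) : ℕ) : ℝ) := by
        rw [hL, List.map_map]
        exact Finset.sum_map_toList S2' (fun j => ((a ((j : ℕ) + 1) : ℕ) : ℝ))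
      have := lemE ht hmono hcover hrho1 hmain L.length L rfl hLne hLinv K hK1 hKt
        (by rw [hLfst]; exact hKH)
      rw [hLsnd] at this
      linarith
  -- conclude
  rw [hcoeff, hcoe2]
  have h1t : (1:ℝ) ≤ t := by exact_mod_cast Nat.one_le_of_lt ht
  have : ((S1.card : ℕ) : ℝ) + ((Hn : ℕ) : ℝ) ≤ (t : ℝ) - 1 := by
    have := hkey
    push_cast
    have hc : ((S1.card + Hn + 1 : ℕ) : ℝ) ≤ (t : ℝ) := by exact_mod_cast hkey
    push_cast at hc
    linarith
  exact this

end Valid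

section Facet
variable {t n b : ℕ} {a : ℕ → ℕ} {gGNS : ℝ → ℝ}

lemma facet (ht : 2 ≤ t)
    (hmono : ∀ i j, 1 ≤ i → i ≤ j → j ≤ t → a j ≤ a i)
    (hcover : (b : ℝ) < mu a t)
    (hmin : mu a t - (a t : ℝ) ≤ (b : ℝ))
    (htn : t < n)
    (lv : ℕ → ℕ)
    (hlv : ∀ j : ℕ, t + 1 ≤ j → j ≤ n →
      lv j ≤ t - 1 ∧ mu a (lv j) - lam a t b < (a j : ℝ) ∧
      (a j : ℝ) ≤ mu a (lv j + 1) - lam a t b ∧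
      mu a (lv j) - lam a t b + rho a t b (lv j) ≤ (a j : ℝ) ∧
      gGNS (a j) = (lv j : ℝ)) :
    ∃ xs : Fin n → (Fin n → ℝ), AffineIndependent ℝ xs ∧
      ∀ i : Fin n, (∀ j, xs i j = 0 ∨ xs i j = 1) ∧
        (∑ j : Fin n, (a ((j : ℕ) + 1) : ℝ) * xs i j) ≤ (b : ℝ) ∧
        (∑ j : Fin n,
          (if (j : ℕ) + 1 ≤ t then 1 else gGNS (a ((j : ℕ) + 1))) * xs i j)
            = (t : ℝ) - 1 := by
  classical
  have hb : mu a t - lam a t b = b := by unfold lam; ring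
  set xs : Fin n → Fin n → ℝ := fun i j =>
    if (i : ℕ) + 1 ≤ t then
      (if ((j : ℕ) + 1 ≤ t ∧ (j : ℕ) ≠ (i : ℕ)) then (1:ℝ) else 0)
    else
      (if ((j : ℕ) = (i : ℕ) ∨ (lv ((i : ℕ) + 1) + 1 < (j : ℕ) + 1 ∧ (j : ℕ) + 1 ≤ t))
        then (1:ℝ) else 0) with hxs
  have hcalcC : ∀ (F : ℕ → ℝ) (i : Fin n), (i : ℕ) + 1 ≤ t →
      ∑ j : Fin n, F ((j : ℕ) + 1) * xs i j
        = (∑ k ∈ Finset.Ioc 0 (i : ℕ), F k) + ∑ k ∈ Finset.Ioc ((i : ℕ) + 1) t, F k := by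
    intro F i hi
    rw [← sumFin (n := n) F (c := 0) (d := (i : ℕ)) (by omega),
        ← sumFin (n := n) F (c := (i : ℕ) + 1) (d := t) (by omega),
        ← Finset.sum_add_distrib]
    apply Finset.sum_congr rfl
    intro j _
    simp only [hxs]
    rw [if_pos hi]
    by_cases e2 : (j : ℕ) + 1 ≤ t
    · by_cases e1 : (j : ℕ) = (i : ℕ)
      · rw [if_neg (by omega), if_neg (by omega), if_neg (by omega)]; ring
      · by_cases e3 : (j : ℕ) + 1 ≤ (i : ℕ)
        · rw [if_pos ⟨e2, e1⟩, if_pos ⟨by omega, e3⟩, if_neg (by omega)]; ring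
        · rw [if_pos ⟨e2, e1⟩, if_neg (by omega), if_pos ⟨by omega, e2⟩]; ring
    · rw [if_neg (by omega), if_neg (by omega), if_neg (by omega)]; ring
  have hcalcN : ∀ (F : ℕ → ℝ) (i : Fin n), t < (i : ℕ) + 1 →
      ∑ j : Fin n, F ((j : ℕ) + 1) * xs i j
        = F ((i : ℕ) + 1) + ∑ k ∈ Finset.Ioc (lv ((i : ℕ) + 1) + 1) t, F k := by
    intro F i hi
    rw [← sumFin (n := n) F (c := lv ((i : ℕ) + 1) + 1) (d := t) (by omega)]
    have hpt : ∀ j : Fin n, F ((j : ℕ) + 1) * xs i j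
        = (if j = i then F ((j : ℕ) + 1) else 0)
          + (if lv ((i : ℕ) + 1) + 1 < (j : ℕ) + 1 ∧ (j : ℕ) + 1 ≤ t
              then F ((j : ℕ) + 1) else 0) := by
      intro j
      simp only [hxs]
      rw [if_neg (by omega)]
      by_cases e1 : (j : ℕ) = (i : ℕ)
      · have : j = i := Fin.ext e1
        rw [if_pos (Or.inl e1), if_pos this, if_neg (by omega)]; ring
      · have hne : j ≠ i := fun h => e1 (congrArg Fin.val h)
        by_cases e4 : lv ((i : ℕ) + 1) + 1 < (j : ℕ) + 1 ∧ (j : ℕ) + 1 ≤ t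
        · rw [if_pos (Or.inr e4), if_neg hne, if_pos e4]; ring
        · rw [if_neg (by tauto), if_neg hne, if_neg e4]; ring
    rw [Finset.sum_congr rfl (fun j _ => hpt j), Finset.sum_add_distrib]
    congr 1
    simp
  refine ⟨xs, ?_, ?_⟩
  · -- affine independence
    have h0n : 0 < n := by omega
    set i0 : Fin n := ⟨0, h0n⟩ with hi0
    rw [affineIndependent_iff_linearIndependent_vsub ℝ xs i0]
    rw [Fintype.linearIndependent_iff]
    intro g hg
    have hco : ∀ c : Fin n,
        (∑ k : {x : Fin n // x ≠ i0}, g k * (xs (k : Fin n) c - xs i0 c)) = 0 := by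
      intro c
      have h1 := congrFun hg c
      rw [Finset.sum_apply] at h1
      simpa [vsub_eq_sub] using h1
    have hi0v : (i0 : ℕ) = 0 := rfl
    have hvne : ∀ k k' : {x : Fin n // x ≠ i0}, k' ≠ k →
        ((k : Fin n) : ℕ) ≠ ((k' : Fin n) : ℕ) := by
      intro k k' hne hE
      exact hne (Subtype.ext (Fin.ext hE.symm))
    have step1 : ∀ k : {x : Fin n // x ≠ i0}, t < ((k : Fin n) : ℕ) + 1 → g k = 0 := by
      intro k hk
      have h := hco (k : Fin n)
      rw [Finset.sum_eq_single k (fun k' _ hne => by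
        have hv := hvne k k' hne
        have e0 : xs i0 (k : Fin n) = 0 := by
          simp only [hxs]; split_ifs <;> first | rfl | (exfalso; omega)
        have e1 : xs (k' : Fin n) (k : Fin n) = 0 := by
          simp only [hxs]; split_ifs <;> first | rfl | (exfalso; omega)
        rw [e0, e1]; ring) (by simp)] at h
      have e0 : xs i0 (k : Fin n) = 0 := by
        simp only [hxs]; split_ifs <;> first | rfl | (exfalso; omega)
      have e1 : xs (k : Fin n) (k : Fin n) = 1 := by
        simp only [hxs]; split_ifs <;> first | rfl | (exfalso; omega) | (exfalso; simp_all)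
      rw [e0, e1] at h
      linarith
    have step2 : ∀ k : {x : Fin n // x ≠ i0}, ((k : Fin n) : ℕ) + 1 ≤ t → g k = 0 := by
      intro k hk
      have hkv : 0 < ((k : Fin n) : ℕ) := by
        rcases Nat.eq_zero_or_pos ((k : Fin n) : ℕ) with h0 | h0
        · exfalso
          exact k.2 (Fin.ext (show ((k : Fin n) : ℕ) = (i0 : ℕ) by omega))
        · exact h0
      have h := hco (k : Fin n)
      rw [Finset.sum_eq_single k (fun k' _ hne => by
        have hv := hvne k k' hne
        by_cases hk' : ((k' : Fin n) : ℕ) + 1 ≤ t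
        · have e0 : xs i0 (k : Fin n) = 1 := by
            simp only [hxs]; split_ifs <;> first | rfl | (exfalso; omega)
          have e1 : xs (k' : Fin n) (k : Fin n) = 1 := by
            simp only [hxs]; split_ifs <;> first | rfl | (exfalso; omega)
          rw [e0, e1]; ring
        · rw [step1 k' (by omega)]; ring) (by simp)] at h
      have e0 : xs i0 (k : Fin n) = 1 := by
        simp only [hxs]; split_ifs <;> first | rfl | (exfalso; omega)
      have e1 : xs (k : Fin n) (k : Fin n) = 0 := by
        simp only [hxs]; split_ifs <;> first | rfl | (exfalso; omega)
      rw [e0, e1] at h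
      linarith
    intro k
    by_cases hk : ((k : Fin n) : ℕ) + 1 ≤ t
    · exact step2 k hk
    · exact step1 k (by omega)
  · -- per-point properties
    intro i
    refine ⟨?_, ?_, ?_⟩
    · intro j
      simp only [hxs]
      split_ifs <;> simp
    · -- weight
      by_cases hi : (i : ℕ) + 1 ≤ t
      · rw [hcalcC (fun k => ((a k : ℕ) : ℝ)) i hi]
        rw [← mu_Ioc, ← mu_diff a (show (i : ℕ) + 1 ≤ t from hi)]
        have hms := mu_succ a (i : ℕ)
        have hat : (a t : ℝ) ≤ (a ((i : ℕ) + 1) : ℝ) := by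
          exact_mod_cast hmono ((i : ℕ) + 1) t (by omega) hi le_rfl
        linarith
      · have hi' : t < (i : ℕ) + 1 := by omega
        obtain ⟨hl1, hl2, hl3, hl4, hl5⟩ := hlv ((i : ℕ) + 1) (by omega) (by omega)
        rw [hcalcN (fun k => ((a k : ℕ) : ℝ)) i hi']
        rw [← mu_diff a (show lv ((i : ℕ) + 1) + 1 ≤ t by omega)]
        linarith
    · -- tightness
      by_cases hi : (i : ℕ) + 1 ≤ t
      · rw [hcalcC (fun k => if k ≤ t then (1:ℝ) else gGNS (a k)) i hi]
        have h1 : ∑ k ∈ Finset.Ioc 0 (i : ℕ), (if k ≤ t then (1:ℝ) else gGNS (a k))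
            = ((i : ℕ) : ℝ) := by
          rw [Finset.sum_congr rfl (fun k hk => if_pos
            (by have := Finset.mem_Ioc.mp hk; omega))]
          rw [Finset.sum_const, Nat.card_Ioc]
          simp
        have h2 : ∑ k ∈ Finset.Ioc ((i : ℕ) + 1) t, (if k ≤ t then (1:ℝ) else gGNS (a k))
            = ((t - ((i : ℕ) + 1) : ℕ) : ℝ) := by
          rw [Finset.sum_congr rfl (fun k hk => if_pos
            (by have := Finset.mem_Ioc.mp hk; omega))]
          rw [Finset.sum_const, Nat.card_Ioc]
          simp
        rw [h1, h2, Nat.cast_sub (by omega)]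
        push_cast
        ring
      · have hi' : t < (i : ℕ) + 1 := by omega
        obtain ⟨hl1, hl2, hl3, hl4, hl5⟩ := hlv ((i : ℕ) + 1) (by omega) (by omega)
        rw [hcalcN (fun k => if k ≤ t then (1:ℝ) else gGNS (a k)) i hi']
        have h0 : (if ((i : ℕ) + 1) ≤ t then (1:ℝ) else gGNS (a ((i : ℕ) + 1)))
            = ((lv ((i : ℕ) + 1) : ℕ) : ℝ) := by
          rw [if_neg (by omega)]
          exact hl5
        have h2 : ∑ k ∈ Finset.Ioc (lv ((i : ℕ) + 1) + 1) t,
            (if k ≤ t then (1:ℝ) else gGNS (a k))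
            = ((t - (lv ((i : ℕ) + 1) + 1) : ℕ) : ℝ) := by
          rw [Finset.sum_congr rfl (fun k hk => if_pos
            (by have := Finset.mem_Ioc.mp hk; omega))]
          rw [Finset.sum_const, Nat.card_Ioc]
          simp
        rw [h0, h2, Nat.cast_sub (by omega)]
        push_cast
        ring

end Facet

/-- Assume `μ₁ − λ ≥ ρ₁ > 0` and that every weight `a_j`, `j ∉ C`,
lying in some `S_h` equals the right endpoint `μ_h − λ + ρ_h`. Then the GNS-lifted
cover inequality is valid for `P` and defines a facet of `conv(P)`. -/
theorem gns_lifting_facet_defining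
    (t n b : ℕ) (a : ℕ → ℕ) (gGNS : ℝ → ℝ)
    (ht : 2 ≤ t)
    (hpos : ∀ i, 1 ≤ i → i ≤ t → 0 < a i)
    (hmono : ∀ i j, 1 ≤ i → i ≤ j → j ≤ t → a j ≤ a i)
    (hcover : (b : ℝ) < mu a t)
    (hmin : mu a t - (a t : ℝ) ≤ (b : ℝ))
    (hrho1 : 0 < rho a t b 1)
    (htn : t < n)
    (hposn : ∀ i, 1 ≤ i → i ≤ n → 0 < a i)
    (halb : ∀ i, 1 ≤ i → i ≤ n → a i ≤ b)
    (hmain : rho a t b 1 ≤ mu a 1 - lam a t b)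
    (hG0 : gGNS 0 = 0)
    (hGF : ∀ h : ℕ, h ≤ t - 1 → ∀ z : ℝ,
      mu a h - lam a t b + rho a t b h < z → z ≤ mu a (h + 1) - lam a t b →
      gGNS z = (h : ℝ))
    (hGS : ∀ h : ℕ, 1 ≤ h → h ≤ t - 1 → ∀ z : ℝ,
      mu a h - lam a t b < z → z ≤ mu a h - lam a t b + rho a t b h →
      gGNS z = (h : ℝ) - (mu a h - lam a t b + rho a t b h - z) / rho a t b 1)
    (hScond : ∀ j, t + 1 ≤ j → j ≤ n → ∀ h : ℕ, 1 ≤ h → h ≤ t - 1 →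
      mu a h - lam a t b < (a j : ℝ) →
      (a j : ℝ) ≤ mu a h - lam a t b + rho a t b h →
      (a j : ℝ) = mu a h - lam a t b + rho a t b h) :
    (∀ x : Fin n → ℝ, (∀ j, x j = 0 ∨ x j = 1) →
      (∑ j : Fin n, (a ((j : ℕ) + 1) : ℝ) * x j) ≤ (b : ℝ) →
      (∑ j : Fin n,
        (if (j : ℕ) + 1 ≤ t then 1 else gGNS (a ((j : ℕ) + 1))) * x j) ≤ (t : ℝ) - 1) ∧
    (∃ xs : Fin n → (Fin n → ℝ), AffineIndependent ℝ xs ∧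
      ∀ i : Fin n, (∀ j, xs i j = 0 ∨ xs i j = 1) ∧
        (∑ j : Fin n, (a ((j : ℕ) + 1) : ℝ) * xs i j) ≤ (b : ℝ) ∧
        (∑ j : Fin n,
          (if (j : ℕ) + 1 ≤ t then 1 else gGNS (a ((j : ℕ) + 1))) * xs i j)
            = (t : ℝ) - 1) := by
  classical
  have hlev := level_choice ht hcover hrho1 hposn halb hGF hGS hScond
  choose lv hlv using hlev
  exact ⟨validity ht hmono hcover hrho1 htn hmain lv hlv,
         facet ht hmono hcover hmin htn lv hlv⟩
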